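/- For positive integers k, l_1, l_2, p and nonnegative integers m, n_1, n_2, the product z_k z_p^m ⋆̄ z_{l_1} z_p^{n_1} z_{l_2} z_p^{n_2} equals: Σ_{0≤i_1≤i_2≤m} z_k(z_p^{i_1} z_{l_1} − z_p^{i_1-1} z_{p+l_1})[(z_p^{i_2-i_1} ⋆̄ z_p^{n_1}) z_{l_2} − (z_p^{i_2-i_1-1} ⋆̄ z_p^{n_1}) z_{p+l_2}](z_p^{m-i_2} ⋆̄ z_p^{n_2}) + Σ_{0≤i_1≤n_1, 0≤i_2≤m} z_{l_1}(z_p^{i_1} z_k − z_p^{i_1-1} z_{p+k})[(z_p^{i_2} ⋆̄ z_p^{n_1-i_1}) z_{l_2} − (z_p^{i_2-1} ⋆̄ z_p^{n_1-i_1}) z_{p+l_2}](z_p^{m-i_2} ⋆̄ z_p^{n_2}) − z_{l_1} z_p^{n_1} z_{k+l_2}(z_p^m ⋆̄ z_p^{n_2}) + Σ_{0≤i≤n_2} z_{l_1} z_p^{n_1} z_{l_2}(z_p^i z_k − z_p^{i-1} z_{p+k})(z_p^m ⋆̄ z_p^{n_2-i}) − Σ_{0≤i≤m} z_{k+l_1}[(z_p^i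 ⋆̄ z_p^{n_1}) z_{l_2} − (z_p^{i-1} ⋆̄ z_p^{n_1}) z_{p+l_2}](z_p^{m-i} ⋆̄ z_p^{n_2}), with convention z_p^{-1} = 0. -/

import Mathlib

open MonoidAlgebra Finset

abbrev H : Type := MonoidAlgebra ℚ (FreeMonoid ℕ+)

noncomputable def word (w : List ℕ+) : H := MonoidAlgebra.single (FreeMonoid.ofList w) 1

noncomputable def z (k : ℕ+) : H := word [k]

noncomputable def st : List ℕ+ → List ℕ+ → H
  | [], w => word w
  | k :: w1, [] => word (k :: w1)
  | k :: w1, l :: w2 =>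
      z k * st w1 (l :: w2) + z l * st (k :: w1) w2 + z (k + l) * st w1 w2
termination_by a b => a.length + b.length
decreasing_by all_goals (simp; try omega)
noncomputable def stbar : List ℕ+ → List ℕ+ → H
  | [], w => word w
  | k :: w1, [] => word (k :: w1)
  | k :: w1, l :: w2 =>
      z k * stbar w1 (l :: w2) + z l * stbar (k :: w1) w2 - z (k + l) * stbar w1 w2
termination_by a b => a.length + b.length
decreasing_by all_goals (simp; try omega)

lemma word_append (u v : List ℕ+) : word (u ++ v) = word u * word v := by
  simp [word, MonoidAlgebra.single_mul_single]

lemma word_cons (a : ℕ+) (w : List ℕ+) : word (a :: w) = z a * word w := by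
  exact word_append [a] w

@[simp] lemma stbar_nil_left (w : List ℕ+) : stbar [] w = word w := by
  rw [stbar]

@[simp] lemma stbar_nil_right (w : List ℕ+) : stbar w [] = word w := by
  cases w <;> rw [stbar]

lemma stbar_cons_cons (k l : ℕ+) (w1 w2 : List ℕ+) :
    stbar (k :: w1) (l :: w2) =
      z k * stbar w1 (l :: w2) + z l * stbar (k :: w1) w2 - z (k + l) * stbar w1 w2 := by
  rw [stbar]

@[simp] lemma word_nil : word [] = 1 := rfl

@[simp] lemma word_singleton (a : ℕ+) : word [a] = z a := rfl

lemma lemG (k p : ℕ+) (m n : ℕ) :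
    stbar (k :: List.replicate m p) (List.replicate n p) =
      ∑ i ∈ Finset.range (n + 1),
        (word (List.replicate i p) * z k
          - if 1 ≤ i then word (List.replicate (i - 1) p) * z (p + k) else 0)
        * stbar (List.replicate m p) (List.replicate (n - i) p) := by
  induction n with
  | zero =>
      simp [word_cons]
  | succ n ih =>
      rw [Finset.sum_range_succ']
      simp only [Nat.add_sub_cancel, Nat.sub_zero, Nat.succ_sub_succ]
      have key : ∀ i ∈ Finset.range (n + 1),
          (word (List.replicate (i + 1) p) * z k
            - if 1 ≤ i + 1 then word (List.replicate i p) * z (p + k) else 0)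
          * stbar (List.replicate m p) (List.replicate (n - i) p)
          = z p * ((word (List.replicate i p) * z k
              - if 1 ≤ i then word (List.replicate (i - 1) p) * z (p + k) else 0)
            * stbar (List.replicate m p) (List.replicate (n - i) p))
            - (if i = 0 then z (p + k) * stbar (List.replicate m p) (List.replicate n p) else 0) := by
        intro i _
        rw [if_pos (Nat.le_add_left 1 i)]
        match i with
        | 0 => simp [List.replicate_succ, word_cons]; noncomm_ring
        | j + 1 =>
            rw [if_pos (Nat.le_add_left 1 j), if_neg (by omega : ¬ (j+1 = 0))]
            simp only [List.replicate_succ, word_cons, Nat.add_sub_cancel]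
            noncomm_ring
      rw [Finset.sum_congr rfl key, Finset.sum_sub_distrib, Finset.sum_ite_eq'
        (Finset.range (n+1)) 0, if_pos (Finset.mem_range.mpr (Nat.succ_pos n)),
        ← Finset.mul_sum, ← ih]
      rw [show List.replicate (n+1) p = p :: List.replicate n p from List.replicate_succ ..,
        stbar_cons_cons, add_comm k p]
      simp only [← List.replicate_succ]
      simp only [List.replicate_zero, word_nil, if_neg (by omega : ¬ (1:ℕ) ≤ 0)]
      noncomm_ring

lemma lemE (p l : ℕ+) (w : List ℕ+) (n m : ℕ) :
    stbar (List.replicate m p) (List.replicate n p ++ l :: w) =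
      ∑ i ∈ Finset.range (m + 1),
        (stbar (List.replicate i p) (List.replicate n p) * z l
          - if 1 ≤ i then stbar (List.replicate (i - 1) p) (List.replicate n p) * z (p + l)
            else 0)
        * stbar (List.replicate (m - i) p) w := by
  induction n generalizing m with
  | zero =>
      induction m with
      | zero => simp [word_cons]
      | succ m ihm =>
          rw [Finset.sum_range_succ']
          simp only [Nat.add_sub_cancel, Nat.sub_zero, Nat.succ_sub_succ, List.replicate_zero,
            List.nil_append, stbar_nil_right, stbar_nil_left]
          have key : ∀ i ∈ Finset.range (m + 1),
              (word (List.replicate (i + 1) p) * z l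
                - if 1 ≤ i + 1 then word (List.replicate i p) * z (p + l) else 0)
              * stbar (List.replicate (m - i) p) w
              = z p * ((word (List.replicate i p) * z l
                  - if 1 ≤ i then word (List.replicate (i - 1) p) * z (p + l) else 0)
                * stbar (List.replicate (m - i) p) w)
                - (if i = 0 then z (p + l) * stbar (List.replicate m p) w else 0) := by
            intro i hi
            rw [if_pos (Nat.le_add_left 1 i)]
            match i with
            | 0 =>
                simp only [Finset.mem_range] at hi
                simp [List.replicate_succ, word_cons]; noncomm_ring
            | j + 1 =>
                rw [if_pos (Nat.le_add_left 1 j), if_neg (by omega : ¬ (j+1 = 0))]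
                simp only [List.replicate_succ, word_cons, Nat.add_sub_cancel]
                noncomm_ring
          rw [Finset.sum_congr rfl key, Finset.sum_sub_distrib, Finset.sum_ite_eq'
            (Finset.range (m+1)) 0, if_pos (Finset.mem_range.mpr (Nat.succ_pos m)),
            ← Finset.mul_sum]
          have hm := ihm
          simp only [List.replicate_zero, List.nil_append, stbar_nil_right,
            stbar_nil_left] at hm
          rw [← hm]
          rw [show List.replicate (m+1) p = p :: List.replicate m p from List.replicate_succ ..,
            stbar_cons_cons]
          simp only [← List.replicate_succ, if_neg (by omega : ¬ (1:ℕ) ≤ 0), word_nil, zero_mul, one_mul, sub_zero]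
          noncomm_ring
  | succ n ihn =>
      induction m with
      | zero =>
          simp [word_append, word_cons, mul_assoc]
      | succ m ihm =>
          rw [Finset.sum_range_succ']
          simp only [Nat.add_sub_cancel, Nat.sub_zero, Nat.succ_sub_succ]
          have key : ∀ i ∈ Finset.range (m + 1),
              (stbar (List.replicate (i + 1) p) (List.replicate (n + 1) p) * z l
                - if 1 ≤ i + 1 then
                    stbar (List.replicate i p) (List.replicate (n + 1) p) * z (p + l) else 0)
              * stbar (List.replicate (m - i) p) w
              = z p * ((stbar (List.replicate i p) (List.replicate (n + 1) p) * z l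
                  - if 1 ≤ i then
                      stbar (List.replicate (i - 1) p) (List.replicate (n + 1) p) * z (p + l)
                    else 0)
                * stbar (List.replicate (m - i) p) w)
                + z p * ((stbar (List.replicate (i + 1) p) (List.replicate n p) * z l
                  - if 1 ≤ i + 1 then
                      stbar (List.replicate i p) (List.replicate n p) * z (p + l) else 0)
                * stbar (List.replicate (m - i) p) w)
                - z (p + p) * ((stbar (List.replicate i p) (List.replicate n p) * z l
                  - if 1 ≤ i then
                      stbar (List.replicate (i - 1) p) (List.replicate n p) * z (p + l) else 0)
                * stbar (List.replicate (m - i) p) w) := by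
            intro i hi
            rw [if_pos (Nat.le_add_left 1 i), if_pos (Nat.le_add_left 1 i)]
            match i with
            | 0 =>
                simp only [if_neg (by omega : ¬ (1:ℕ) ≤ 0), List.replicate_succ,
                  List.replicate_zero, stbar_nil_left, Nat.sub_zero]
                rw [stbar_cons_cons p p [] (List.replicate n p)]
                simp only [stbar_nil_left, stbar_nil_right, word_cons]
                noncomm_ring
            | j + 1 =>
                rw [if_pos (Nat.le_add_left 1 j), if_pos (Nat.le_add_left 1 j)]
                simp only [Nat.add_sub_cancel]
                rw [show List.replicate (j+1+1) p = p :: List.replicate (j+1) p from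
                    List.replicate_succ ..,
                  show List.replicate (j+1) p = p :: List.replicate j p from
                    List.replicate_succ ..,
                  show List.replicate (n+1) p = p :: List.replicate n p from
                    List.replicate_succ .., stbar_cons_cons, stbar_cons_cons]
                simp only [← List.replicate_succ]
                noncomm_ring
          rw [Finset.sum_congr rfl key]
          simp only [Finset.sum_add_distrib, Finset.sum_sub_distrib, ← Finset.mul_sum]
          have h2 : ∑ i ∈ Finset.range (m+1),
              (stbar (List.replicate (i+1) p) (List.replicate n p) * z l
                - if 1 ≤ i + 1 then
                    stbar (List.replicate i p) (List.replicate n p) * z (p + l) else 0)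
              * stbar (List.replicate (m - i) p) w
              = stbar (List.replicate (m+1) p) (List.replicate n p ++ l :: w)
                - (stbar (List.replicate 0 p) (List.replicate n p) * z l
                  - if 1 ≤ 0 then
                      stbar (List.replicate (0-1) p) (List.replicate n p) * z (p + l) else 0)
                  * stbar (List.replicate (m+1) p) w := by
            rw [ihn (m+1)]
            conv_rhs => rw [Finset.sum_range_succ']
            simp only [Nat.succ_sub_succ, Nat.sub_zero]
            abel
          rw [h2, ← ihm, ← ihn m]
          rw [show List.replicate (m+1) p = p :: List.replicate m p from List.replicate_succ ..,
            show List.replicate (n+1) p ++ l :: w = p :: (List.replicate n p ++ l :: w) by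
              simp [List.replicate_succ],
            stbar_cons_cons]
          rw [show p :: (List.replicate n p ++ l :: w) = List.replicate (n+1) p ++ l :: w by
              simp [List.replicate_succ]]
          simp only [← List.replicate_succ, List.replicate_zero, stbar_nil_left,
            if_neg (by omega : ¬ (1:ℕ) ≤ 0)]
          rw [show List.replicate (n+1) p = p :: List.replicate n p from List.replicate_succ ..,
            word_cons]
          simp only [← List.replicate_succ]
          noncomm_ring

set_option maxHeartbeats 1000000 in
lemma lemF (k l p : ℕ+) (m n2 : ℕ) : ∀ n : ℕ,
    stbar (k :: List.replicate m p) (List.replicate n p ++ l :: List.replicate n2 p) =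
      (∑ i1 ∈ Finset.range (n + 1), ∑ i2 ∈ Finset.range (m + 1),
        (word (List.replicate i1 p) * z k
          - if 1 ≤ i1 then word (List.replicate (i1 - 1) p) * z (p + k) else 0)
        * (stbar (List.replicate i2 p) (List.replicate (n - i1) p) * z l
          - if 1 ≤ i2 then
              stbar (List.replicate (i2 - 1) p) (List.replicate (n - i1) p) * z (p + l) else 0)
        * stbar (List.replicate (m - i2) p) (List.replicate n2 p))
      - word (List.replicate n p) * z (k + l) * stbar (List.replicate m p) (List.replicate n2 p)
      + ∑ i ∈ Finset.range (n2 + 1),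
          word (List.replicate n p) * z l
          * (word (List.replicate i p) * z k
            - if 1 ≤ i then word (List.replicate (i - 1) p) * z (p + k) else 0)
          * stbar (List.replicate m p) (List.replicate (n2 - i) p) := by
  intro n
  induction n with
  | zero =>
      simp only [List.replicate_zero, List.nil_append]
      rw [stbar_cons_cons]
      have e1 := lemE p l (List.replicate n2 p) 0 m
      simp only [List.replicate_zero, List.nil_append, stbar_nil_right] at e1
      rw [e1, lemG k p m n2]
      simp only [Finset.sum_range_one, Nat.sub_zero, List.replicate_zero, word_nil,
        stbar_nil_right, if_neg (by omega : ¬ (1:ℕ) ≤ 0), sub_zero, one_mul, zero_add,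
        Finset.mul_sum, mul_assoc]
      abel
  | succ n ihn =>
      rw [show List.replicate (n+1) p ++ l :: List.replicate n2 p
            = p :: (List.replicate n p ++ l :: List.replicate n2 p) by
          simp [List.replicate_succ],
        stbar_cons_cons,
        show p :: (List.replicate n p ++ l :: List.replicate n2 p)
            = List.replicate (n+1) p ++ l :: List.replicate n2 p by
          simp [List.replicate_succ],
        lemE p l (List.replicate n2 p) (n+1) m, ihn, lemE p l (List.replicate n2 p) n m,
        add_comm k p]
      conv_rhs => rw [Finset.sum_range_succ']
      simp only [Nat.succ_sub_succ, Nat.add_sub_cancel, Nat.sub_zero]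
      have key : ∀ i1 ∈ Finset.range (n + 1),
          (∑ i2 ∈ Finset.range (m + 1),
            (word (List.replicate (i1 + 1) p) * z k
              - if 1 ≤ i1 + 1 then word (List.replicate i1 p) * z (p + k) else 0)
            * (stbar (List.replicate i2 p) (List.replicate (n - i1) p) * z l
              - if 1 ≤ i2 then
                  stbar (List.replicate (i2 - 1) p) (List.replicate (n - i1) p) * z (p + l)
                else 0)
            * stbar (List.replicate (m - i2) p) (List.replicate n2 p))
          = z p * (∑ i2 ∈ Finset.range (m + 1),
              (word (List.replicate i1 p) * z k
                - if 1 ≤ i1 then word (List.replicate (i1 - 1) p) * z (p + k) else 0)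
              * (stbar (List.replicate i2 p) (List.replicate (n - i1) p) * z l
                - if 1 ≤ i2 then
                    stbar (List.replicate (i2 - 1) p) (List.replicate (n - i1) p) * z (p + l)
                  else 0)
              * stbar (List.replicate (m - i2) p) (List.replicate n2 p))
            - (if i1 = 0 then
                z (p + k) * ∑ i2 ∈ Finset.range (m + 1),
                  (stbar (List.replicate i2 p) (List.replicate n p) * z l
                    - if 1 ≤ i2 then
                        stbar (List.replicate (i2 - 1) p) (List.replicate n p) * z (p + l)
                      else 0)
                  * stbar (List.replicate (m - i2) p) (List.replicate n2 p)
              else 0) := by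
        intro i1 _
        rw [if_pos (Nat.le_add_left 1 i1)]
        match i1 with
        | 0 =>
            rw [if_pos rfl, Finset.mul_sum, Finset.mul_sum, ← Finset.sum_sub_distrib]
            refine Finset.sum_congr rfl fun i2 _ => ?_
            simp only [Nat.sub_zero, if_neg (by omega : ¬ (1:ℕ) ≤ 0), sub_zero,
              List.replicate_zero, word_nil, one_mul, List.replicate_succ, word_cons]
            noncomm_ring
        | j + 1 =>
            rw [if_neg (by omega : ¬ (j + 1 = 0)), sub_zero, if_pos (Nat.le_add_left 1 j),
              Finset.mul_sum]
            refine Finset.sum_congr rfl fun i2 _ => ?_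
            simp only [Nat.add_sub_cancel, List.replicate_succ, word_cons]
            noncomm_ring
      rw [Finset.sum_congr rfl key, Finset.sum_sub_distrib,
        Finset.sum_ite_eq' (Finset.range (n + 1)) 0,
        if_pos (Finset.mem_range.mpr (Nat.succ_pos n)), ← Finset.mul_sum]
      have h1 : ∑ x ∈ Finset.range (m + 1),
          (word (List.replicate 0 p) * z k
            - if 1 ≤ 0 then word (List.replicate (0 - 1) p) * z (p + k) else 0) *
              (stbar (List.replicate x p) (List.replicate (n + 1) p) * z l -
                if 1 ≤ x then
                  stbar (List.replicate (x - 1) p) (List.replicate (n + 1) p) * z (p + l)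
                else 0) *
            stbar (List.replicate (m - x) p) (List.replicate n2 p)
          = z k * ∑ i ∈ Finset.range (m + 1),
              (stbar (List.replicate i p) (List.replicate (n + 1) p) * z l -
                if 1 ≤ i then
                  stbar (List.replicate (i - 1) p) (List.replicate (n + 1) p) * z (p + l)
                else 0) *
              stbar (List.replicate (m - i) p) (List.replicate n2 p) := by
        rw [Finset.mul_sum]
        refine Finset.sum_congr rfl fun i _ => ?_
        simp only [if_neg (by omega : ¬ (1:ℕ) ≤ 0), sub_zero, List.replicate_zero, word_nil,
          one_mul, mul_assoc]
      have h2 : word (List.replicate (n + 1) p) = z p * word (List.replicate n p) := by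
        rw [show List.replicate (n+1) p = p :: List.replicate n p from List.replicate_succ ..,
          word_cons]
      rw [h1, h2]
      rw [mul_add (z p), mul_sub (z p)]
      have h3 : ∑ i ∈ Finset.range (n2 + 1),
          z p * word (List.replicate n p) * z l
          * (word (List.replicate i p) * z k
            - if 1 ≤ i then word (List.replicate (i - 1) p) * z (p + k) else 0)
          * stbar (List.replicate m p) (List.replicate (n2 - i) p)
          = z p * ∑ i ∈ Finset.range (n2 + 1),
              word (List.replicate n p) * z l
              * (word (List.replicate i p) * z k
                - if 1 ≤ i then word (List.replicate (i - 1) p) * z (p + k) else 0)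
              * stbar (List.replicate m p) (List.replicate (n2 - i) p) := by
        rw [Finset.mul_sum]
        exact Finset.sum_congr rfl fun i _ => by noncomm_ring
      have h4 : z p * word (List.replicate n p) * z (k + l)
            * stbar (List.replicate m p) (List.replicate n2 p)
          = z p * (word (List.replicate n p) * z (k + l)
            * stbar (List.replicate m p) (List.replicate n2 p)) := by
        noncomm_ring
      rw [h3, h4]
      abel

lemma tri (m : ℕ) (f : ℕ → ℕ → H) :
    ∑ i ∈ Finset.range (m + 1), ∑ j ∈ Finset.range (m - i + 1), f i j
      = ∑ s ∈ Finset.range (m + 1), ∑ i ∈ Finset.range (s + 1), f i (s - i) := by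
  rw [Finset.sum_sigma', Finset.sum_sigma']
  refine Finset.sum_nbij' (i := fun x => ⟨x.1 + x.2, x.1⟩) (j := fun x => ⟨x.2, x.1 - x.2⟩)
    ?_ ?_ ?_ ?_ ?_ <;>
    rintro ⟨a, b⟩ hab <;> simp only [Finset.mem_sigma, Finset.mem_range] at hab ⊢
  · omega
  · omega
  · rw [show a + b - a = b by omega]
  · rw [show b + (a - b) = a by omega]
  · rw [show a + b - a = b by omega]

set_option maxHeartbeats 1000000 in
theorem stbar_one_two (k l1 l2 p : ℕ+) (m n1 n2 : ℕ) :
    stbar (k :: List.replicate m p) (l1 :: (List.replicate n1 p ++ l2 :: List.replicate n2 p)) =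
      (∑ i2 ∈ Finset.range (m + 1), ∑ i1 ∈ Finset.range (i2 + 1),
        z k * (word (List.replicate i1 p) * z l1
            - if 1 ≤ i1 then word (List.replicate (i1 - 1) p) * z (p + l1) else 0)
        * (stbar (List.replicate (i2 - i1) p) (List.replicate n1 p) * z l2
            - if i1 < i2 then
                stbar (List.replicate (i2 - i1 - 1) p) (List.replicate n1 p) * z (p + l2)
              else 0)
        * stbar (List.replicate (m - i2) p) (List.replicate n2 p))
      + (∑ i1 ∈ Finset.range (n1 + 1), ∑ i2 ∈ Finset.range (m + 1),
        z l1 * (word (List.replicate i1 p) * z k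
            - if 1 ≤ i1 then word (List.replicate (i1 - 1) p) * z (p + k) else 0)
        * (stbar (List.replicate i2 p) (List.replicate (n1 - i1) p) * z l2
            - if 1 ≤ i2 then
                stbar (List.replicate (i2 - 1) p) (List.replicate (n1 - i1) p) * z (p + l2)
              else 0)
        * stbar (List.replicate (m - i2) p) (List.replicate n2 p))
      - word (l1 :: List.replicate n1 p) * z (k + l2)
          * stbar (List.replicate m p) (List.replicate n2 p)
      + (∑ i ∈ Finset.range (n2 + 1),
        word (l1 :: List.replicate n1 p) * z l2
        * (word (List.replicate i p) * z k
            - if 1 ≤ i then word (List.replicate (i - 1) p) * z (p + k) else 0)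
        * stbar (List.replicate m p) (List.replicate (n2 - i) p))
      - (∑ i ∈ Finset.range (m + 1),
        z (k + l1)
        * (stbar (List.replicate i p) (List.replicate n1 p) * z l2
            - if 1 ≤ i then stbar (List.replicate (i - 1) p) (List.replicate n1 p) * z (p + l2)
              else 0)
        * stbar (List.replicate (m - i) p) (List.replicate n2 p)) := by
  have t1 : z k * stbar (List.replicate m p)
        (l1 :: (List.replicate n1 p ++ l2 :: List.replicate n2 p)) =
      ∑ i2 ∈ Finset.range (m + 1), ∑ i1 ∈ Finset.range (i2 + 1),
        z k * (word (List.replicate i1 p) * z l1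
            - if 1 ≤ i1 then word (List.replicate (i1 - 1) p) * z (p + l1) else 0)
        * (stbar (List.replicate (i2 - i1) p) (List.replicate n1 p) * z l2
            - if i1 < i2 then
                stbar (List.replicate (i2 - i1 - 1) p) (List.replicate n1 p) * z (p + l2)
              else 0)
        * stbar (List.replicate (m - i2) p) (List.replicate n2 p) := by
    have e0 := lemE p l1 (List.replicate n1 p ++ l2 :: List.replicate n2 p) 0 m
    simp only [List.replicate_zero, List.nil_append, stbar_nil_right] at e0
    rw [e0, Finset.mul_sum]
    have hinner : ∀ i1 : ℕ,
        z k * ((word (List.replicate i1 p) * z l1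
            - if 1 ≤ i1 then word (List.replicate (i1 - 1) p) * z (p + l1) else 0)
          * stbar (List.replicate (m - i1) p) (List.replicate n1 p ++ l2 :: List.replicate n2 p))
        = ∑ j ∈ Finset.range (m - i1 + 1),
            z k * ((word (List.replicate i1 p) * z l1
                - if 1 ≤ i1 then word (List.replicate (i1 - 1) p) * z (p + l1) else 0)
              * ((stbar (List.replicate j p) (List.replicate n1 p) * z l2
                  - if 1 ≤ j then
                      stbar (List.replicate (j - 1) p) (List.replicate n1 p) * z (p + l2)
                    else 0)
                * stbar (List.replicate (m - i1 - j) p) (List.replicate n2 p))) := fun i1 => by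
      rw [lemE p l2 (List.replicate n2 p) n1 (m - i1), Finset.mul_sum, Finset.mul_sum]
    simp only [hinner]
    refine (tri m fun i j => z k * ((word (List.replicate i p) * z l1
        - if 1 ≤ i then word (List.replicate (i - 1) p) * z (p + l1) else 0)
      * ((stbar (List.replicate j p) (List.replicate n1 p) * z l2
          - if 1 ≤ j then
              stbar (List.replicate (j - 1) p) (List.replicate n1 p) * z (p + l2) else 0)
        * stbar (List.replicate (m - i - j) p) (List.replicate n2 p)))).trans ?_
    refine Finset.sum_congr rfl fun i2 hi2 => Finset.sum_congr rfl fun i1 hi1 => ?_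
    simp only [Finset.mem_range] at hi1 hi2
    rw [show m - i1 - (i2 - i1) = m - i2 by omega,
      if_congr (show (1 ≤ i2 - i1) ↔ (i1 < i2) by omega) rfl rfl]
    noncomm_ring
  rw [stbar_cons_cons, t1, lemF k l2 p m n2 n1, lemE p l2 (List.replicate n2 p) n1 m,
    mul_add (z l1), mul_sub (z l1)]
  have hT2 : ∑ i1 ∈ Finset.range (n1 + 1), ∑ i2 ∈ Finset.range (m + 1),
      z l1 * (word (List.replicate i1 p) * z k
          - if 1 ≤ i1 then word (List.replicate (i1 - 1) p) * z (p + k) else 0)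
      * (stbar (List.replicate i2 p) (List.replicate (n1 - i1) p) * z l2
          - if 1 ≤ i2 then
              stbar (List.replicate (i2 - 1) p) (List.replicate (n1 - i1) p) * z (p + l2)
            else 0)
      * stbar (List.replicate (m - i2) p) (List.replicate n2 p)
      = z l1 * ∑ i1 ∈ Finset.range (n1 + 1), ∑ i2 ∈ Finset.range (m + 1),
        (word (List.replicate i1 p) * z k
          - if 1 ≤ i1 then word (List.replicate (i1 - 1) p) * z (p + k) else 0)
        * (stbar (List.replicate i2 p) (List.replicate (n1 - i1) p) * z l2
          - if 1 ≤ i2 then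
              stbar (List.replicate (i2 - 1) p) (List.replicate (n1 - i1) p) * z (p + l2)
            else 0)
        * stbar (List.replicate (m - i2) p) (List.replicate n2 p) := by
    rw [Finset.mul_sum]
    refine Finset.sum_congr rfl fun i1 _ => ?_
    rw [Finset.mul_sum]
    exact Finset.sum_congr rfl fun i2 _ => by noncomm_ring
  have hT3 : word (l1 :: List.replicate n1 p) * z (k + l2)
        * stbar (List.replicate m p) (List.replicate n2 p)
      = z l1 * (word (List.replicate n1 p) * z (k + l2)
        * stbar (List.replicate m p) (List.replicate n2 p)) := by
    rw [word_cons]; noncomm_ring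
  have hT4 : ∑ i ∈ Finset.range (n2 + 1),
      word (l1 :: List.replicate n1 p) * z l2
      * (word (List.replicate i p) * z k
          - if 1 ≤ i then word (List.replicate (i - 1) p) * z (p + k) else 0)
      * stbar (List.replicate m p) (List.replicate (n2 - i) p)
      = z l1 * ∑ i ∈ Finset.range (n2 + 1),
        word (List.replicate n1 p) * z l2
        * (word (List.replicate i p) * z k
          - if 1 ≤ i then word (List.replicate (i - 1) p) * z (p + k) else 0)
        * stbar (List.replicate m p) (List.replicate (n2 - i) p) := by
    rw [Finset.mul_sum]
    exact Finset.sum_congr rfl fun i _ => by rw [word_cons]; noncomm_ring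
  have hT5 : ∑ i ∈ Finset.range (m + 1),
      z (k + l1)
      * (stbar (List.replicate i p) (List.replicate n1 p) * z l2
          - if 1 ≤ i then stbar (List.replicate (i - 1) p) (List.replicate n1 p) * z (p + l2)
            else 0)
      * stbar (List.replicate (m - i) p) (List.replicate n2 p)
      = z (k + l1) * ∑ i ∈ Finset.range (m + 1),
        (stbar (List.replicate i p) (List.replicate n1 p) * z l2
          - if 1 ≤ i then stbar (List.replicate (i - 1) p) (List.replicate n1 p) * z (p + l2)
            else 0)
        * stbar (List.replicate (m - i) p) (List.replicate n2 p) := by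
    rw [Finset.mul_sum]
    exact Finset.sum_congr rfl fun i _ => by noncomm_ring
  rw [hT2, hT3, hT4, hT5]
  abel
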